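/- For any n-dimensional probability vector y, T^M(y) = T(y). In particular, if x^{⊗k} ⊗ c' ≺ y^{⊗k} ⊗ c' for some integer k ≥ 1 and some probability vector c', then there exists a probability vector c'' such that x ⊗ c'' ≺ y ⊗ c''. -/

import Mathlib

open Finset

variable {ι κ : Type*}

/-- `eSum x l` is the sum of the `l` largest components of `x`. -/
noncomputable def eSum [Fintype ι] (x : ι → ℝ) (l : ℕ) : ℝ :=
  sSup {r : ℝ | ∃ s : Finset ι, s.card = l ∧ r = ∑ i ∈ s, x i}

/-- Majorization `x ≺ y` for vectors over the same (finite) index type: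
`e_l(x) ≤ e_l(y)` for all `1 ≤ l ≤ n - 1`, with equal total sums. -/
def Maj [Fintype ι] (x y : ι → ℝ) : Prop :=
  (∀ l : ℕ, 1 ≤ l → l < Fintype.card ι → eSum x l ≤ eSum y l) ∧
    ∑ i, x i = ∑ i, y i

/-- A probability vector: nonnegative components summing to 1. -/
def IsProbVec [Fintype ι] (x : ι → ℝ) : Prop :=
  (∀ i, 0 ≤ x i) ∧ ∑ i, x i = 1

/-- Kronecker product of two vectors. -/
def kron (x : ι → ℝ) (c : κ → ℝ) : ι × κ → ℝ := fun p => x p.1 * c p.2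

/-- `k`-fold Kronecker power of a vector. -/
def kpow (x : ι → ℝ) (k : ℕ) : (Fin k → ι) → ℝ := fun f => ∏ j, x (f j)

/-- Direct sum (concatenation) of two vectors. -/
def dsum (x : ι → ℝ) (c : κ → ℝ) : ι ⊕ κ → ℝ := Sum.elim x c

/-- `k`-fold direct sum (concatenation) of `x` with itself. -/
def dpow (x : ι → ℝ) (k : ℕ) : Fin k × ι → ℝ := fun p => x p.2

/-- `x ∈ S°(y)`: all partial-sum inequalities `e_l(x) < e_l(y)` are strict for
`1 ≤ l ≤ n - 1`, and the total sums coincide. -/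
def InteriorS [Fintype ι] (x y : ι → ℝ) : Prop :=
  (∀ l : ℕ, 1 ≤ l → l < Fintype.card ι → eSum x l < eSum y l) ∧
    ∑ i, x i = ∑ i, y i

/-- `d_x`: the number of nonzero components of `x`. -/
noncomputable def dsupp (x : ι → ℝ) : ℕ := Nat.card (Function.support x)

/-- The `α`-Renyi entropy `S^{(α)}(x)`; at `α = 1` it is the Shannon entropy. -/
noncomputable def renyi [Fintype ι] (x : ι → ℝ) (α : ℝ) : ℝ :=
  if α = 1 then -∑ i, x i * Real.logb 2 (x i)
  else (if 0 ≤ α then (1 : ℝ) else -1) / (1 - α) *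
    Real.logb 2 (∑ i, if x i = 0 then 0 else x i ^ α)

/-- The Renyi entropy of `x` is not less than that of `y`. -/
def RenyiGE [Fintype ι] [Fintype κ] (x : ι → ℝ) (y : κ → ℝ) : Prop :=
  (dsupp x > dsupp y ∧ ∀ α : ℝ, 0 ≤ α → renyi y α ≤ renyi x α) ∨
  (dsupp x = dsupp y ∧ ∀ α : ℝ, renyi y α ≤ renyi x α)

section AuxLemmas

variable [Fintype ι] [Fintype κ]

lemma eSumSet_finite (x : ι → ℝ) (l : ℕ) :
    {r : ℝ | ∃ s : Finset ι, s.card = l ∧ r = ∑ i ∈ s, x i}.Finite := by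
  apply Set.Finite.subset (Set.finite_range (fun s : Finset ι => ∑ i ∈ s, x i))
  rintro r ⟨s, -, rfl⟩
  exact ⟨s, rfl⟩

lemma sum_le_eSum (x : ι → ℝ) {s : Finset ι} {l : ℕ} (h : s.card = l) :
    ∑ i ∈ s, x i ≤ eSum x l :=
  le_csSup (eSumSet_finite x l).bddAbove ⟨s, h, rfl⟩

lemma eSum_attained (x : ι → ℝ) {l : ℕ} (h : l ≤ Fintype.card ι) :
    ∃ s : Finset ι, s.card = l ∧ eSum x l = ∑ i ∈ s, x i := by
  have hne : {r : ℝ | ∃ s : Finset ι, s.card = l ∧ r = ∑ i ∈ s, x i}.Nonempty := by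
    obtain ⟨s, -, hs⟩ := Finset.exists_subset_card_eq (s := (univ : Finset ι)) (n := l) (by simpa using h)
    exact ⟨∑ i ∈ s, x i, s, hs, rfl⟩
  exact hne.csSup_mem (eSumSet_finite x l)

lemma eSum_zero (x : ι → ℝ) : eSum x 0 = 0 := by
  obtain ⟨s, hs, h⟩ := eSum_attained x (Nat.zero_le _)
  rw [h, Finset.card_eq_zero.mp hs, Finset.sum_empty]

lemma eSum_card (x : ι → ℝ) : eSum x (Fintype.card ι) = ∑ i, x i := by
  obtain ⟨s, hs, h⟩ := eSum_attained x le_rfl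
  rw [h, (Finset.card_eq_iff_eq_univ s).mp (by simpa using hs)]

lemma eSum_comp_equiv (e : κ ≃ ι) (x : ι → ℝ) (l : ℕ) : eSum (x ∘ e) l = eSum x l := by
  classical
  unfold eSum
  congr 1
  ext r
  constructor
  · rintro ⟨s, hs, rfl⟩
    refine ⟨s.image e, ?_, ?_⟩
    · rw [Finset.card_image_of_injective _ e.injective, hs]
    · rw [Finset.sum_image (by intro a _ b _ hab; exact e.injective hab)]
      rfl
  · rintro ⟨s, hs, rfl⟩
    refine ⟨s.image e.symm, ?_, ?_⟩
    · rw [Finset.card_image_of_injective _ e.symm.injective, hs]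
    · rw [Finset.sum_image (by intro a _ b _ hab; exact e.symm.injective hab)]
      simp

lemma eSum_le_of_maj {P Q : ι → ℝ} (h : Maj P Q) {j : ℕ} (hj : j ≤ Fintype.card ι) :
    eSum P j ≤ eSum Q j := by
  rcases Nat.eq_zero_or_pos j with rfl | h1
  · simp [eSum_zero]
  rcases eq_or_lt_of_le hj with rfl | hlt
  · rw [eSum_card, eSum_card, h.2]
  · exact h.1 j h1 hlt

lemma maj_comp_equiv₂ {u v : ι → ℝ} (e₁ e₂ : κ ≃ ι) (h : Maj u v) :
    Maj (u ∘ e₁) (v ∘ e₂) := by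
  constructor
  · intro l h1 h2
    rw [eSum_comp_equiv, eSum_comp_equiv]
    exact h.1 l h1 (by rwa [Fintype.card_congr e₁] at h2)
  · have h1 := Equiv.sum_comp e₁ u
    have h2 := Equiv.sum_comp e₂ v
    simp only [Function.comp]
    rw [h1, h2]
    exact h.2

lemma eSum_smul {t : ℝ} (ht : 0 ≤ t) (w : ι → ℝ) {l : ℕ} (hl : l ≤ Fintype.card ι) :
    eSum (fun i => t * w i) l = t * eSum w l := by
  obtain ⟨s, hs, hes⟩ := eSum_attained (fun i => t * w i) hl
  obtain ⟨s', hs', hes'⟩ := eSum_attained w hl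
  apply le_antisymm
  · rw [hes, ← Finset.mul_sum]
    exact mul_le_mul_of_nonneg_left (sum_le_eSum w hs) ht
  · rw [hes', Finset.mul_sum]
    exact sum_le_eSum _ hs'

lemma maj_smul {u v : ι → ℝ} {t : ℝ} (ht : 0 ≤ t) (h : Maj u v) :
    Maj (fun i => t * u i) (fun i => t * v i) := by
  constructor
  · intro l h1 h2
    rw [eSum_smul ht u h2.le, eSum_smul ht v h2.le]
    exact mul_le_mul_of_nonneg_left (h.1 l h1 h2) ht
  · simp only [← Finset.mul_sum]
    rw [h.2]

lemma maj_dsum {P Q : ι → ℝ} (w : κ → ℝ) (h : Maj P Q) : Maj (dsum P w) (dsum Q w) := by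
  have hsum : ∑ p, dsum P w p = ∑ p, dsum Q w p := by
    rw [Fintype.sum_sum_type, Fintype.sum_sum_type]
    simp only [dsum, Sum.elim_inl, Sum.elim_inr, h.2]
  refine ⟨?_, hsum⟩
  intro l h1 h2
  have hl : l ≤ Fintype.card (ι ⊕ κ) := h2.le
  obtain ⟨s, hs, hes⟩ := eSum_attained (dsum P w) hl
  have hcards : s.toLeft.card + s.toRight.card = l := by
    rw [Finset.card_toLeft_add_card_toRight, hs]
  have hj : s.toLeft.card ≤ Fintype.card ι := by
    simpa using Finset.card_le_univ s.toLeft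
  obtain ⟨t₁, ht₁, het₁⟩ := eSum_attained Q hj
  have key : ∑ a ∈ s.toLeft, P a ≤ ∑ a ∈ t₁, Q a := by
    calc ∑ a ∈ s.toLeft, P a ≤ eSum P s.toLeft.card := sum_le_eSum P rfl
      _ ≤ eSum Q s.toLeft.card := eSum_le_of_maj h hj
      _ = ∑ a ∈ t₁, Q a := het₁
  have final : ∑ a ∈ t₁, Q a + ∑ b ∈ s.toRight, w b ≤ eSum (dsum Q w) l := by
    have := sum_le_eSum (dsum Q w) (s := t₁.disjSum s.toRight)
      (by rw [Finset.card_disjSum, ht₁, hcards])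
    simp only [dsum] at this
    rwa [Finset.sum_sumElim] at this
  rw [hes, ← Finset.toLeft_disjSum_toRight (u := s)]
  simp only [dsum]
  rw [Finset.sum_sumElim]
  calc ∑ a ∈ s.toLeft, P a + ∑ b ∈ s.toRight, w b
      ≤ ∑ a ∈ t₁, Q a + ∑ b ∈ s.toRight, w b := by linarith
    _ ≤ eSum (dsum Q w) l := final

end AuxLemmas


/-- Split last-block equiv: sends `(a, j, f, i)` to the `P`-block if `j = last`,
inserting `a` at the front of `f` via `Fin.cons`. -/
def auxEquivF (n k' m : ℕ) :
    (Fin n × (Fin (k' + 1) × (Fin k' → Fin n) × Fin m)) ≃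
      (((Fin (k' + 1) → Fin n) × Fin m) ⊕ (Fin k' × ((Fin (k' + 1) → Fin n) × Fin m))) where
  toFun p :=
    if h : p.2.1 = Fin.last k' then Sum.inl (Fin.cons p.1 p.2.2.1, p.2.2.2)
    else Sum.inr (⟨p.2.1.val, lt_of_le_of_ne (Nat.lt_succ_iff.mp p.2.1.isLt)
      (fun hh => h (Fin.ext hh))⟩, (Fin.cons p.1 p.2.2.1, p.2.2.2))
  invFun q :=
    Sum.elim (fun gi => (gi.1 0, Fin.last k', fun s => gi.1 s.succ, gi.2))
      (fun jgi => (jgi.2.1 0, jgi.1.castSucc, fun s => jgi.2.1 s.succ, jgi.2.2)) q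
  left_inv := by
    rintro ⟨a, j, f, i⟩
    by_cases h : j = Fin.last k' <;>
      simp [h, Fin.cons_zero, Fin.cons_succ, Fin.ext_iff]
  right_inv := by
    rintro (⟨g, i⟩ | ⟨j, g, i⟩)
    · have hg : (Fin.cons (g 0) fun s => g s.succ) = g := Fin.cons_self_tail g
      simp [hg]
    · have h : (Fin.castSucc j) ≠ Fin.last k' := (Fin.castSucc_lt_last j).ne
      have hg : (Fin.cons (g 0) fun s => g s.succ) = g := Fin.cons_self_tail g
      simp [h, hg, Fin.ext_iff]

/-- Split zero-block equiv: sends `(a, j, f, i)` to the `Q`-block if `j = 0`,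
inserting `a` at the end of `f` via `Fin.snoc`. -/
def auxEquivG (n k' m : ℕ) :
    (Fin n × (Fin (k' + 1) × (Fin k' → Fin n) × Fin m)) ≃
      (((Fin (k' + 1) → Fin n) × Fin m) ⊕ (Fin k' × ((Fin (k' + 1) → Fin n) × Fin m))) where
  toFun p :=
    if h : p.2.1 = 0 then Sum.inl (Fin.snoc p.2.2.1 p.1, p.2.2.2)
    else Sum.inr (⟨p.2.1.val - 1, by
        have := p.2.1.isLt
        have hne : p.2.1.val ≠ 0 := fun hh => h (Fin.ext hh)
        omega⟩, (Fin.snoc p.2.2.1 p.1, p.2.2.2))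
  invFun q :=
    Sum.elim (fun gi => (gi.1 (Fin.last k'), 0, fun s => gi.1 s.castSucc, gi.2))
      (fun jgi => (jgi.2.1 (Fin.last k'), jgi.1.succ, fun s => jgi.2.1 s.castSucc, jgi.2.2)) q
  left_inv := by
    rintro ⟨a, j, f, i⟩
    by_cases h : j = 0
    · simp [h, Fin.snoc_last, Fin.snoc_castSucc]
    · have hne : j.val ≠ 0 := fun hh => h (Fin.ext hh)
      simp only [dif_neg h, Sum.elim_inr, Fin.snoc_last, Fin.snoc_castSucc]
      refine Prod.ext rfl (Prod.ext ?_ rfl)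
      exact Fin.ext (by simp [Fin.val_succ]; omega)
  right_inv := by
    rintro (⟨g, i⟩ | ⟨j, g, i⟩)
    · have hg : Fin.snoc (fun s => g s.castSucc) (g (Fin.last k')) = g := Fin.snoc_init_self g
      simp [hg]
    · have h : (Fin.succ j) ≠ 0 := Fin.succ_ne_zero j
      have hg : Fin.snoc (fun s => g s.castSucc) (g (Fin.last k')) = g := Fin.snoc_init_self g
      simp [h, hg, Fin.ext_iff]

/-- The catalyst: `(1/(k'+1)) ⊕_j x^{⊗j} ⊗ y^{⊗(k'-j)} ⊗ c`, encoded uniformly. -/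
noncomputable def catc {n m : ℕ} (x y : Fin n → ℝ) (c : Fin m → ℝ) (k' : ℕ) :
    (Fin (k' + 1) × (Fin k' → Fin n) × Fin m) → ℝ := fun p =>
  ((k' : ℝ) + 1)⁻¹ * (∏ s : Fin k', (if (s : ℕ) < (p.1 : ℕ) then x else y) (p.2.1 s)) * c p.2.2

/-- The common middle blocks. -/
noncomputable def catW {n m : ℕ} (x y : Fin n → ℝ) (c : Fin m → ℝ) (k' : ℕ) :
    (Fin k' × ((Fin (k' + 1) → Fin n) × Fin m)) → ℝ := fun q =>
  ((k' : ℝ) + 1)⁻¹ *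
    (∏ s : Fin (k' + 1), (if (s : ℕ) < (q.1 : ℕ) + 1 then x else y) (q.2.1 s)) * c q.2.2

lemma catc_prob {n m : ℕ} {x y : Fin n → ℝ} {c : Fin m → ℝ} (k' : ℕ)
    (hx : IsProbVec x) (hy : IsProbVec y) (hc : IsProbVec c) :
    IsProbVec (catc x y c k') := by
  constructor
  · intro p
    refine mul_nonneg (mul_nonneg (by positivity) (Finset.prod_nonneg fun s _ => ?_)) (hc.1 _)
    by_cases hcond : (s : ℕ) < (p.1 : ℕ)
    · simp only [if_pos hcond]; exact hx.1 _
    · simp only [if_neg hcond]; exact hy.1 _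
  · rw [Fintype.sum_prod_type]
    have inner : ∀ j : Fin (k' + 1),
        ∑ q : (Fin k' → Fin n) × Fin m, catc x y c k' (j, q) = ((k' : ℝ) + 1)⁻¹ := by
      intro j
      rw [Fintype.sum_prod_type]
      have step1 : ∀ f : Fin k' → Fin n,
          ∑ i : Fin m, catc x y c k' (j, f, i)
            = ((k' : ℝ) + 1)⁻¹ * ∏ s : Fin k', (if (s : ℕ) < (j : ℕ) then x else y) (f s) := by
        intro f
        unfold catc
        dsimp only
        exact (Finset.mul_sum univ c (((k' : ℝ) + 1)⁻¹ *
          ∏ s : Fin k', (if (s : ℕ) < (j : ℕ) then x else y) (f s))).symm.trans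
          (by rw [hc.2, mul_one])
      rw [Finset.sum_congr rfl (fun f _ => step1 f), ← Finset.mul_sum]
      have step2 : ∑ f : Fin k' → Fin n, ∏ s : Fin k', (if (s : ℕ) < (j : ℕ) then x else y) (f s)
          = ∏ s : Fin k', ∑ a : Fin n, (if (s : ℕ) < (j : ℕ) then x else y) a :=
        (Fintype.prod_sum (κ := fun _ : Fin k' => Fin n)
          (fun s a => (if (s : ℕ) < (j : ℕ) then x else y) a)).symm
      rw [step2]
      have step3 : ∀ s : Fin k', ∑ a : Fin n, (if (s : ℕ) < (j : ℕ) then x else y) a = 1 := by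
        intro s
        by_cases hcond : (s : ℕ) < (j : ℕ)
        · simp only [if_pos hcond]; exact hx.2
        · simp only [if_neg hcond]; exact hy.2
      rw [Finset.prod_congr rfl (fun s _ => step3 s), Finset.prod_const_one, mul_one]
    rw [Finset.sum_congr rfl (fun j _ => inner j), Finset.sum_const, Finset.card_univ,
      Fintype.card_fin, nsmul_eq_mul]
    push_cast
    field_simp

lemma hF_eq {n m : ℕ} (x y : Fin n → ℝ) (c : Fin m → ℝ) (k' : ℕ) :
    kron x (catc x y c k') =
      (dsum (fun p => ((k' : ℝ) + 1)⁻¹ * kron (kpow x (k' + 1)) c p) (catW x y c k')) ∘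
        (auxEquivF n k' m) := by
  funext p
  obtain ⟨a, j, f, i⟩ := p
  by_cases h : j = Fin.last k'
  · simp only [auxEquivF, Equiv.coe_fn_mk, Function.comp_apply, dif_pos h, dsum, Sum.elim_inl,
      kron, kpow, catc]
    subst h
    have hval : ∀ s : Fin k',
        ((if (s : ℕ) < ((Fin.last k') : ℕ) then x else y) (f s)) = x (f s) := by
      intro s
      rw [if_pos]
      exact s.isLt
    rw [Finset.prod_congr rfl (fun s _ => hval s), Fin.prod_univ_succ]
    simp only [Fin.cons_zero, Fin.cons_succ]
    ring
  · simp only [auxEquivF, Equiv.coe_fn_mk, Function.comp_apply, dif_neg h, dsum, Sum.elim_inr,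
      kron, catW, catc]
    rw [Fin.prod_univ_succ]
    simp only [Fin.cons_zero, Fin.cons_succ, Fin.val_succ, Fin.val_zero]
    simp only [Nat.succ_pos, ↓reduceIte]
    have hval : ∀ s : Fin k',
        (if (s : ℕ) + 1 < (j : ℕ) + 1 then x else y) (f s)
          = (if (s : ℕ) < (j : ℕ) then x else y) (f s) := by
      intro s
      simp only [Nat.add_lt_add_iff_right]
    rw [Finset.prod_congr rfl (fun s _ => hval s)]
    ring

lemma hG_eq {n m : ℕ} (x y : Fin n → ℝ) (c : Fin m → ℝ) (k' : ℕ) :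
    kron y (catc x y c k') =
      (dsum (fun p => ((k' : ℝ) + 1)⁻¹ * kron (kpow y (k' + 1)) c p) (catW x y c k')) ∘
        (auxEquivG n k' m) := by
  funext p
  obtain ⟨a, j, f, i⟩ := p
  by_cases h : j = 0
  · simp only [auxEquivG, Equiv.coe_fn_mk, Function.comp_apply, dif_pos h, dsum, Sum.elim_inl,
      kron, kpow, catc]
    subst h
    have hval : ∀ s : Fin k',
        ((if (s : ℕ) < ((0 : Fin (k' + 1)) : ℕ) then x else y) (f s)) = y (f s) := by
      intro s
      rw [if_neg]
      simp
    rw [Finset.prod_congr rfl (fun s _ => hval s), Fin.prod_univ_castSucc]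
    simp only [Fin.snoc_castSucc, Fin.snoc_last]
    ring
  · have hne : (j : ℕ) ≠ 0 := fun hh => h (Fin.ext hh)
    simp only [auxEquivG, Equiv.coe_fn_mk, Function.comp_apply, dif_neg h, dsum, Sum.elim_inr,
      kron, catW, catc]
    rw [Fin.prod_univ_castSucc]
    simp only [Fin.snoc_castSucc, Fin.snoc_last, Fin.coe_castSucc, Fin.val_last]
    have hj1 : (j : ℕ) - 1 + 1 = (j : ℕ) := by omega
    rw [hj1]
    rw [if_neg (by have := j.isLt; omega)]
    ring


/-- `T^M(y) = T(y)`: `x^{⊗k} ⊗ c' ≺ y^{⊗k} ⊗ c'` for some `k ≥ 1` and some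
probability vector `c'` iff there is a probability vector `c''` with `x ⊗ c'' ≺ y ⊗ c''`. -/
theorem stmt3 {n : ℕ} (x y : Fin n → ℝ) (hx : IsProbVec x) (hy : IsProbVec y) :
    (∃ k : ℕ, 1 ≤ k ∧ ∃ (m : ℕ) (c : Fin m → ℝ), IsProbVec c ∧
        Maj (kron (kpow x k) c) (kron (kpow y k) c)) ↔
      (∃ (m : ℕ) (c : Fin m → ℝ), IsProbVec c ∧ Maj (kron x c) (kron y c)) := by
  constructor
  · rintro ⟨k, hk, m, c, hc, hmaj⟩
    obtain ⟨k', rfl⟩ : ∃ k', k = k' + 1 := ⟨k - 1, (Nat.succ_pred_eq_of_pos hk).symm⟩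
    have ht : (0 : ℝ) ≤ ((k' : ℝ) + 1)⁻¹ := by positivity
    have hmaj3 := maj_dsum (catW x y c k') (maj_smul ht hmaj)
    have hkey : Maj (kron x (catc x y c k')) (kron y (catc x y c k')) := by
      rw [hF_eq x y c k', hG_eq x y c k']
      exact maj_comp_equiv₂ _ _ hmaj3
    have hprob := catc_prob k' hx hy hc
    set τ := Fin (k' + 1) × (Fin k' → Fin n) × Fin m with hτ
    let e := (Fintype.equivFin τ).symm
    refine ⟨Fintype.card τ, (catc x y c k') ∘ e, ⟨fun i => hprob.1 _, ?_⟩, ?_⟩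
    · rw [← hprob.2]
      exact Equiv.sum_comp e _
    · have hx' : kron x ((catc x y c k') ∘ e) =
          (kron x (catc x y c k')) ∘ (Equiv.prodCongr (Equiv.refl (Fin n)) e) := rfl
      have hy' : kron y ((catc x y c k') ∘ e) =
          (kron y (catc x y c k')) ∘ (Equiv.prodCongr (Equiv.refl (Fin n)) e) := rfl
      rw [hx', hy']
      exact maj_comp_equiv₂ _ _ hkey
  · rintro ⟨m, c, hc, hmaj⟩
    refine ⟨1, le_rfl, m, c, hc, ?_⟩
    have h1 : kron (kpow x 1) c = (kron x c) ∘
        (Equiv.prodCongr (Equiv.funUnique (Fin 1) (Fin n)) (Equiv.refl (Fin m))) := by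
      funext p
      obtain ⟨f, i⟩ := p
      simp [kron, kpow, Fin.prod_univ_one, Equiv.funUnique]
    have h2 : kron (kpow y 1) c = (kron y c) ∘
        (Equiv.prodCongr (Equiv.funUnique (Fin 1) (Fin n)) (Equiv.refl (Fin m))) := by
      funext p
      obtain ⟨f, i⟩ := p
      simp [kron, kpow, Fin.prod_univ_one, Equiv.funUnique]
    rw [h1, h2]
    exact maj_comp_equiv₂ _ _ hmaj
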